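/- Let α = log_4(8/3), let β : ℕ → ℝ be given by β_d = (1/2)·log_4(3/2) for d ≥ 3 and β_d = 0 for d ≤ 2, and let c = 4. For every integer D ≥ 4 and every finite list d = (d_1, …, d_f) of integers with 0 ≤ f ≤ D and d_i ≥ 3 for all i, it holds that c^{−Δ1(D,d)} + c^{−Δ2(D,d)} ≤ 1. -/
import Mathlib


/-- The simple-analysis parameter function `β`:
`β_d = (1/2)·log_4(3/2)` for `d ≥ 3` and `β_d = 0` for `d ≤ 2`. -/
noncomputable def simpleBeta : ℕ → ℝ := fun d =>
  if 3 ≤ d then (1 / 2) * Real.logb 4 (3 / 2) else 0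

/-- `Δ1(D, d) = 1 − f·α/D + Σ_{i=1}^f (β_{d_i} − β_{d_i−1})` where `f` is the
length of the list `d`. -/
noncomputable def Delta1 (α : ℝ) (β : ℕ → ℝ) (D : ℕ) (d : List ℕ) : ℝ :=
  1 - (d.length : ℝ) * α / D + (d.map (fun x => β x - β (x - 1))).sum

/-- `Δ2(D, d) = α − 2α/D + Σ_{i=1}^f β_{d_i} − β_{d'}` where
`d' = D + Σ_{i=1}^f (d_i − 2)`. -/
noncomputable def Delta2 (α : ℝ) (β : ℕ → ℝ) (D : ℕ) (d : List ℕ) : ℝ :=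
  α - 2 * α / D + (d.map β).sum - β (D + (d.map (fun x => x - 2)).sum)

lemma key (F Dr : ℝ) (hD : 4 ≤ Dr) (hF0 : 0 ≤ F) (hFD : F ≤ Dr) :
    (1/4:ℝ) * (8/3) ^ (F/Dr) + (3/4) * ((2/3:ℝ)) ^ (F/2) ≤ 1 := by
  have hDr0 : (0:ℝ) < Dr := by linarith
  have ht0 : 0 ≤ F / Dr := div_nonneg hF0 hDr0.le
  have ht1 : F / Dr ≤ 1 := (div_le_one hDr0).mpr hFD
  rcases le_total F 4 with hF4 | hF4
  · have h1 : ((8/3:ℝ)) ^ (F/Dr) ≤ 1 + (F/Dr) * (5/3) := by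
      have := rpow_one_add_le_one_add_mul_self (s := (5/3:ℝ)) (by norm_num)
        (p := F/Dr) ht0 ht1
      norm_num at this ⊢
      linarith
    have htle : F / Dr ≤ F / 4 := div_le_div_of_nonneg_left hF0 (by norm_num) hD
    have h2 : ((2/3:ℝ)) ^ (F/2) ≤ 1 - (F/4) * (5/9) := by
      have he : ((2/3:ℝ)) ^ (F/2) = ((4/9:ℝ)) ^ (F/4) := by
        rw [show (4/9:ℝ) = (2/3:ℝ) ^ (2:ℝ) by
          rw [show (2:ℝ) = ((2:ℕ):ℝ) by norm_num, Real.rpow_natCast]; norm_num]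
        rw [← Real.rpow_mul (by norm_num)]
        ring_nf
      have := rpow_one_add_le_one_add_mul_self (s := (-5/9:ℝ)) (by norm_num)
        (p := F/4) (by linarith) (by linarith)
      rw [he]
      norm_num at this ⊢
      linarith
    nlinarith [htle]
  · have h1 : ((8/3:ℝ)) ^ (F/Dr) ≤ 8/3 := by
      calc ((8/3:ℝ)) ^ (F/Dr) ≤ (8/3:ℝ) ^ (1:ℝ) :=
        Real.rpow_le_rpow_of_exponent_le (by norm_num) ht1
      _ = 8/3 := Real.rpow_one _
    have h2 : ((2/3:ℝ)) ^ (F/2) ≤ 4/9 := by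
      calc ((2/3:ℝ)) ^ (F/2) ≤ (2/3:ℝ) ^ (2:ℝ) :=
        Real.rpow_le_rpow_of_exponent_ge (by norm_num) (by norm_num) (by linarith)
      _ = 4/9 := by
        rw [show (2:ℝ) = ((2:ℕ):ℝ) by norm_num, Real.rpow_natCast]; norm_num
    linarith

/-- With `α = log_4(8/3)`, the simple-analysis `β`, and `c = 4`,
for every `D ≥ 4` and every list `d = (d_1, …, d_f)` with `f ≤ D` and `d_i ≥ 3`,
`c^{−Δ1(D,d)} + c^{−Δ2(D,d)} ≤ 1`. -/
theorem stmt14 (D : ℕ) (hD : 4 ≤ D) (d : List ℕ)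
    (hf : d.length ≤ D) (hd : ∀ x ∈ d, 3 ≤ x) :
    (4 : ℝ) ^ (-(Delta1 (Real.logb 4 (8 / 3)) simpleBeta D d))
      + (4 : ℝ) ^ (-(Delta2 (Real.logb 4 (8 / 3)) simpleBeta D d)) ≤ 1 := by
  set α := Real.logb 4 (8/3) with hα
  set L := Real.logb 4 (3/2) with hLdef
  have h4 : (0:ℝ) < 4 := by norm_num
  have ha : (4:ℝ) ^ α = 8/3 := Real.rpow_logb h4 (by norm_num) (by norm_num)
  have hbL : (4:ℝ) ^ L = 3/2 := Real.rpow_logb h4 (by norm_num) (by norm_num)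
  have hL0 : 0 ≤ L := Real.logb_nonneg (by norm_num) (by norm_num)
  set F := (d.length : ℝ) with hF
  set Dr := (D : ℝ) with hDr
  have hDr4 : (4:ℝ) ≤ Dr := by rw [hDr]; exact_mod_cast hD
  have hF0 : (0:ℝ) ≤ F := by positivity
  have hFD : F ≤ Dr := by rw [hF, hDr]; exact_mod_cast hf
  -- beta sum
  have hbsum : (d.map simpleBeta).sum = F * ((1/2) * L) := by
    have hmap : d.map simpleBeta = d.map (fun _ => (1/2) * L) := by
      apply List.map_congr_left
      intro x hx
      simp [simpleBeta, if_pos (hd x hx), hLdef]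
    rw [hmap]
    simp [List.map_const', List.sum_replicate, smul_eq_mul, hF, mul_comm]
  have hbub : ∀ n : ℕ, simpleBeta n ≤ (1/2) * L := by
    intro n
    simp only [simpleBeta]
    split
    · simp [hLdef]
    · positivity
  have hdsum : 0 ≤ (d.map (fun x => simpleBeta x - simpleBeta (x - 1))).sum := by
    apply List.sum_nonneg
    intro x hx
    obtain ⟨a, ha', rfl⟩ := List.mem_map.mp hx
    have : simpleBeta a = (1/2) * L := by
      simp [simpleBeta, if_pos (hd a ha'), hLdef]
    rw [this]
    linarith [hbub (a-1)]
  have hd' : simpleBeta (D + (d.map (fun x => x - 2)).sum) = (1/2) * L := by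
    simp only [simpleBeta]
    rw [if_pos (by omega)]
  -- first term
  have hterm1 : (4:ℝ) ^ (-(Delta1 α simpleBeta D d)) ≤ (1/4) * (8/3) ^ (F/Dr) := by
    have hle : -(Delta1 α simpleBeta D d) ≤ α * (F/Dr) + (-1) := by
      simp only [Delta1]
      have : F * α / Dr = α * (F/Dr) := by ring
      rw [← hF, ← hDr] at *
      linarith [hdsum, this.le, this.ge]
    calc (4:ℝ) ^ (-(Delta1 α simpleBeta D d)) ≤ (4:ℝ) ^ (α * (F/Dr) + (-1)) :=
          Real.rpow_le_rpow_of_exponent_le (by norm_num) hle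
      _ = (1/4) * (8/3) ^ (F/Dr) := by
          rw [Real.rpow_add h4, Real.rpow_mul h4.le, ha, Real.rpow_neg_one]
          ring
  -- second term
  have hterm2 : (4:ℝ) ^ (-(Delta2 α simpleBeta D d)) ≤ (3/4) * ((2/3:ℝ)) ^ (F/2) := by
    have heq : -(Delta2 α simpleBeta D d) = α * (2/Dr - 1) + L * ((1 - F)/2) := by
      simp only [Delta2]
      rw [hbsum, hd']
      rw [← hDr]
      ring
    rw [heq, Real.rpow_add h4, Real.rpow_mul h4.le, Real.rpow_mul h4.le, ha, hbL]
    have hc1 : ((8/3:ℝ)) ^ (2/Dr - 1) ≤ ((8/3:ℝ)) ^ (-(1/2):ℝ) := by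
      apply Real.rpow_le_rpow_of_exponent_le (by norm_num)
      have : 2/Dr ≤ 1/2 := by
        rw [div_le_div_iff₀ (by linarith) (by norm_num)]; linarith
      linarith
    have hc2 : ((3/2:ℝ)) ^ ((1 - F)/2) = (3/2:ℝ) ^ ((1:ℝ)/2) * ((2/3:ℝ)) ^ (F/2) := by
      have : ((2/3:ℝ)) ^ (F/2) = ((3/2:ℝ)) ^ (-(F/2)) := by
        rw [Real.rpow_neg (by norm_num), ← Real.inv_rpow (by norm_num)]
        norm_num
      rw [this, ← Real.rpow_add (by norm_num)]
      ring_nf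
    have hconst : ((8/3:ℝ)) ^ (-(1/2):ℝ) * (3/2:ℝ) ^ ((1:ℝ)/2) = 3/4 := by
      rw [Real.rpow_neg (by norm_num)]
      rw [show ((8/3:ℝ)) ^ ((1:ℝ)/2) = Real.sqrt (8/3) from (Real.sqrt_eq_rpow _).symm,
        show ((3/2:ℝ)) ^ ((1:ℝ)/2) = Real.sqrt (3/2) from (Real.sqrt_eq_rpow _).symm,
        ← Real.sqrt_inv, ← Real.sqrt_mul (by norm_num),
        show ((8/3:ℝ))⁻¹ * (3/2) = (3/4)^2 by norm_num, Real.sqrt_sq (by norm_num)]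
    calc ((8/3:ℝ)) ^ (2/Dr - 1) * ((3/2:ℝ)) ^ ((1 - F)/2)
        ≤ ((8/3:ℝ)) ^ (-(1/2):ℝ) * ((3/2:ℝ)) ^ ((1 - F)/2) := by
          apply mul_le_mul_of_nonneg_right hc1 (Real.rpow_nonneg (by norm_num) _)
      _ = (3/4) * ((2/3:ℝ)) ^ (F/2) := by
          rw [hc2, ← mul_assoc, hconst]
  calc (4:ℝ) ^ (-(Delta1 α simpleBeta D d)) + (4:ℝ) ^ (-(Delta2 α simpleBeta D d))
      ≤ (1/4) * (8/3) ^ (F/Dr) + (3/4) * ((2/3:ℝ)) ^ (F/2) := add_le_add hterm1 hterm2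
    _ ≤ 1 := key F Dr hDr4 hF0 hFD
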